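/- Let g be a standard Gaussian vector in ℝⁿ partitioned into l blocks of size k, and B a set of s blocks. Define z(g) := ‖Σ_{b∉B} g_{V_b}‖₂·(Σ_{b∈B} x⋆_{V_b}/‖x⋆_{V_b}‖₂ − λφ) + Σ_{b∉B} g_{V_b}. Then E‖g − z(g)‖₂² = k·(s + (l − s)·u₂), where u₂ := ‖Σ_{b∈B} x⋆_{V_b}/‖x⋆_{V_b}‖₂ − λφ‖₂². -/

import Mathlib

open MeasureTheory ProbabilityTheory Finset
open scoped Classical

/-- The standard Gaussian measure on `ℝⁿ`. -/
noncomputable def stdGaussian (n : ℕ) : Measure (EuclideanSpace ℝ (Fin n)) :=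
  (Measure.pi fun _ : Fin n => gaussianReal 0 1).map (MeasurableEquiv.toLp 2 (Fin n → ℝ))

/-- Restriction of a vector to a coordinate set (zero elsewhere). -/
noncomputable def restrict' {n : ℕ} (I : Finset (Fin n)) (g : EuclideanSpace ℝ (Fin n)) :
    EuclideanSpace ℝ (Fin n) :=
  WithLp.toLp 2 (fun i => if i ∈ I then g i else 0)

section Aux
open MeasureTheory ProbabilityTheory Finset Real Set
open scoped Classical ENNReal NNReal

lemma pdf_eq (x : ℝ) : gaussianPDFReal 0 1 x = (√(2*π))⁻¹ * rexp (-(2⁻¹) * x^2) := by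
  rw [gaussianPDFReal]
  norm_num
  left; congr 1; ring

lemma gauss_eq : gaussianReal 0 1
    = (volume : Measure ℝ).withDensity (fun x => ((gaussianPDFReal 0 1 x).toNNReal : ℝ≥0∞)) := by
  rw [gaussianReal_of_var_ne_zero _ one_ne_zero]; rfl

lemma meas_pdf : Measurable fun x => (gaussianPDFReal 0 1 x).toNNReal :=
  (measurable_gaussianPDFReal 0 1).real_toNNReal

lemma gauss_integral_eq (f : ℝ → ℝ) :
    ∫ x, f x ∂(gaussianReal 0 1) = ∫ x, gaussianPDFReal 0 1 x * f x := by
  rw [gauss_eq, integral_withDensity_eq_integral_smul meas_pdf]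
  refine integral_congr_ae (Filter.Eventually.of_forall fun x => ?_)
  simp [NNReal.smul_def, Real.coe_toNNReal _ (gaussianPDFReal_nonneg 0 1 x)]

lemma gauss_integrable_iff (f : ℝ → ℝ) :
    Integrable f (gaussianReal 0 1) ↔ Integrable (fun x => gaussianPDFReal 0 1 x * f x) volume := by
  rw [gauss_eq, integrable_withDensity_iff_integrable_smul meas_pdf]
  refine integrable_congr (Filter.Eventually.of_forall fun x => ?_)
  simp [NNReal.smul_def, Real.coe_toNNReal _ (gaussianPDFReal_nonneg 0 1 x)]

lemma gauss_integrable_id : Integrable (fun x : ℝ => x) (gaussianReal 0 1) := by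
  rw [gauss_integrable_iff]
  have : Integrable (fun x : ℝ => (√(2*π))⁻¹ * (x * rexp (-(2⁻¹) * x^2))) volume :=
    ((integrable_mul_exp_neg_mul_sq (by norm_num : (0:ℝ) < 2⁻¹))).const_mul _
  refine this.congr (Filter.Eventually.of_forall fun x => ?_)
  show _ = gaussianPDFReal 0 1 x * x
  rw [pdf_eq]; ring

lemma gauss_integral_id : ∫ x, x ∂(gaussianReal 0 1) = 0 := by
  rw [gauss_integral_eq]
  have h0 : ∫ x : ℝ, gaussianPDFReal 0 1 x * x
      = ∫ x : ℝ, gaussianPDFReal 0 1 (-x) * (-x) := by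
    exact ((Measure.measurePreserving_neg (volume : Measure ℝ)).integral_comp
      (Homeomorph.neg ℝ).measurableEmbedding fun x => gaussianPDFReal 0 1 x * x).symm
  have hodd : ∀ x : ℝ, gaussianPDFReal 0 1 (-x) * (-x) = -(gaussianPDFReal 0 1 x * x) := by
    intro x; rw [pdf_eq, pdf_eq]; ring_nf
  have h2 : (∫ x : ℝ, gaussianPDFReal 0 1 (-x) * (-x))
      = -∫ x : ℝ, gaussianPDFReal 0 1 x * x := by
    simp_rw [hodd]; exact integral_neg _
  linarith [h0, h2]

lemma sq_exp_int : Integrable (fun x : ℝ => x^2 * rexp (-(2⁻¹) * x^2)) volume := by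
  have := integrable_rpow_mul_exp_neg_mul_sq (by norm_num : (0:ℝ) < 2⁻¹) (by norm_num : (-1:ℝ) < 2)
  simpa [Real.rpow_two] using this

lemma Ioi_val : ∫ x in Ioi (0:ℝ), x^2 * rexp (-(2⁻¹) * x^2) = (√2 * √π)/2 := by
  have h := integral_rpow_mul_exp_neg_mul_rpow (by norm_num : (0:ℝ) < 2)
    (by norm_num : (-1:ℝ) < 2) (by norm_num : (0:ℝ) < 2⁻¹)
  simp_rw [Real.rpow_two] at h
  rw [h]
  have h32 : (-((2:ℝ)+1)/2) = -(3/2 : ℝ) := by norm_num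
  have hb : ((2:ℝ)⁻¹) ^ (-((2:ℝ)+1)/2) = (2:ℝ) ^ ((3:ℝ)/2) := by
    rw [h32, ← Real.rpow_neg_one (2:ℝ), ← Real.rpow_mul (by norm_num)]
    norm_num
  have hg : Real.Gamma (((2:ℝ)+1)/2) = (1/2) * √π := by
    rw [show (((2:ℝ)+1)/2) = (1/2 : ℝ) + 1 by norm_num, Real.Gamma_add_one (by norm_num),
      Real.Gamma_one_half_eq]
  have h2 : (2:ℝ) ^ ((3:ℝ)/2) = 2 * √2 := by
    rw [show ((3:ℝ)/2) = (1:ℝ) + 1/2 by norm_num, Real.rpow_add (by norm_num),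
      Real.rpow_one, ← Real.sqrt_eq_rpow]
  rw [hb, hg, h2]
  ring

lemma I2_val : ∫ x : ℝ, x^2 * rexp (-(2⁻¹) * x^2) = √(2*π) := by
  have hsplit := intervalIntegral.integral_Iic_add_Ioi (b := (0:ℝ)) (μ := volume)
    sq_exp_int.integrableOn sq_exp_int.integrableOn
  have hIic : ∫ x in Iic (0:ℝ), x^2 * rexp (-(2⁻¹) * x^2)
      = ∫ x in Ioi (0:ℝ), x^2 * rexp (-(2⁻¹) * x^2) := by
    have h1 := integral_comp_neg_Iic (0:ℝ) (fun x => x^2 * rexp (-(2⁻¹) * x^2))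
    simp only [neg_zero] at h1
    rw [← h1]
    refine setIntegral_congr_fun measurableSet_Iic fun x _ => ?_
    ring_nf
  rw [← hsplit, hIic, Ioi_val, Real.sqrt_mul (by norm_num)]
  ring

lemma gauss_integrable_sq : Integrable (fun x : ℝ => x^2) (gaussianReal 0 1) := by
  rw [gauss_integrable_iff]
  have : Integrable (fun x : ℝ => (√(2*π))⁻¹ * (x^2 * rexp (-(2⁻¹) * x^2))) volume :=
    sq_exp_int.const_mul _
  refine this.congr (Filter.Eventually.of_forall fun x => ?_)
  show _ = gaussianPDFReal 0 1 x * x^2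
  rw [pdf_eq]; ring

lemma gauss_integral_sq : ∫ x, x^2 ∂(gaussianReal 0 1) = 1 := by
  rw [gauss_integral_eq]
  have : ∀ x : ℝ, gaussianPDFReal 0 1 x * x^2 = (√(2*π))⁻¹ * (x^2 * rexp (-(2⁻¹) * x^2)) := by
    intro x; rw [pdf_eq]; ring
  simp_rw [this]
  rw [integral_const_mul, I2_val]
  rw [inv_mul_cancel₀]
  positivity

lemma gauss_integrable_abs : Integrable (fun x : ℝ => |x|) (gaussianReal 0 1) :=
  gauss_integrable_id.abs

noncomputable def gpi (ι : Type*) [Fintype ι] : Measure (ι → ℝ) :=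
  Measure.pi fun _ : ι => gaussianReal 0 1

instance (ι : Type*) [Fintype ι] : IsProbabilityMeasure (gpi ι) := by
  unfold gpi; infer_instance

lemma map_eval_gpi {ι : Type*} [Fintype ι] (i : ι) :
    (gpi ι).map (fun g => g i) = gaussianReal 0 1 := by
  refine Measure.ext fun s hs => ?_
  rw [Measure.map_apply (measurable_pi_apply i) hs]
  have h1 : (fun g : ι → ℝ => g i) ⁻¹' s
      = Set.pi Set.univ (Function.update (fun _ => Set.univ) i s) := by
    rw [Set.eval_preimage]
  rw [h1, gpi, Measure.pi_pi]
  rw [Fintype.prod_eq_single i ?_]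
  · rw [Function.update_self]
  · intro j hj; rw [Function.update_of_ne hj]; simp

lemma integral_eval_gpi {ι : Type*} [Fintype ι] (i : ι) (f : ℝ → ℝ)
    (hf : AEStronglyMeasurable f (gaussianReal 0 1)) :
    ∫ g : ι → ℝ, f (g i) ∂gpi ι = ∫ x, f x ∂gaussianReal 0 1 := by
  rw [← map_eval_gpi (ι := ι) i] at hf ⊢
  exact (integral_map (@measurable_pi_apply ι (fun _ => ℝ) _ i).aemeasurable hf).symm

lemma integrable_eval_gpi {ι : Type*} [Fintype ι] (i : ι) (f : ℝ → ℝ)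
    (hf : AEStronglyMeasurable f (gaussianReal 0 1)) :
    Integrable (fun g : ι → ℝ => f (g i)) (gpi ι) ↔ Integrable f (gaussianReal 0 1) := by
  rw [← map_eval_gpi (ι := ι) i] at hf ⊢
  exact (integrable_map_measure hf (@measurable_pi_apply ι (fun _ => ℝ) _ i).aemeasurable).symm

lemma split_eq {ι : Type*} [Fintype ι] (p : ι → Prop) [DecidablePred p]
    (F₁ : ({ j // p j } → ℝ) → ℝ) (F₂ : ({ j // ¬ p j } → ℝ) → ℝ) :
    ∫ g : ι → ℝ, F₁ (fun j => g j) * F₂ (fun j => g j) ∂gpi ι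
      = (∫ x, F₁ x ∂gpi { j // p j }) * (∫ y, F₂ y ∂gpi { j // ¬ p j }) := by
  have hmp := measurePreserving_piEquivPiSubtypeProd (fun _ : ι => gaussianReal 0 1) p
  have h := hmp.integral_comp' (f := MeasurableEquiv.piEquivPiSubtypeProd (fun _ : ι => ℝ) p)
    (fun z => F₁ z.1 * F₂ z.2)
  calc ∫ g : ι → ℝ, F₁ (fun j => g j) * F₂ (fun j => g j) ∂gpi ι
      = ∫ z, F₁ z.1 * F₂ z.2
          ∂((gpi { j // p j }).prod (gpi { j // ¬ p j })) := h
    _ = _ := integral_prod_mul _ _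

lemma split_int {ι : Type*} [Fintype ι] (p : ι → Prop) [DecidablePred p]
    {F₁ : ({ j // p j } → ℝ) → ℝ} {F₂ : ({ j // ¬ p j } → ℝ) → ℝ}
    (hF₁ : Integrable F₁ (gpi { j // p j })) (hF₂ : Integrable F₂ (gpi { j // ¬ p j })) :
    Integrable (fun g : ι → ℝ => F₁ (fun j => g j) * F₂ (fun j => g j)) (gpi ι) := by
  have hmp := measurePreserving_piEquivPiSubtypeProd (fun _ : ι => gaussianReal 0 1) p
  have := ((hmp.integrable_comp_emb
    (MeasurableEquiv.piEquivPiSubtypeProd (fun _ : ι => ℝ) p).measurableEmbedding).mpr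
    (hF₁.mul_prod hF₂))
  exact this

lemma integrable_sqrt_sum' {ι : Type*} [Fintype ι] (s : Finset ι) :
    Integrable (fun x : ι → ℝ => Real.sqrt (∑ j ∈ s, (x j)^2)) (gpi ι) := by
  have habs : AEStronglyMeasurable (fun t : ℝ => |t|) (gaussianReal 0 1) :=
    continuous_abs.measurable.aestronglyMeasurable
  have hm : AEStronglyMeasurable (fun x : ι → ℝ => Real.sqrt (∑ j ∈ s, (x j)^2)) (gpi ι) := by
    apply Measurable.aestronglyMeasurable
    exact (Finset.measurable_sum _ fun j _ => (measurable_pi_apply j).pow_const 2).sqrt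
  have hint : Integrable (fun x : ι → ℝ => ∑ j ∈ s, |x j|) (gpi ι) :=
    integrable_finset_sum _ fun j _ =>
      (integrable_eval_gpi j (fun t => |t|) habs).mpr gauss_integrable_abs
  refine hint.mono' hm (Filter.Eventually.of_forall fun x => ?_)
  rw [Real.norm_eq_abs, abs_of_nonneg (Real.sqrt_nonneg _)]
  calc Real.sqrt (∑ j ∈ s, (x j)^2) ≤ Real.sqrt ((∑ j ∈ s, |x j|)^2) := Real.sqrt_le_sqrt (by
        refine le_trans (le_of_eq (Finset.sum_congr rfl fun i _ => (sq_abs _).symm))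
          (Finset.sum_sq_le_sq_sum_of_nonneg fun i _ => abs_nonneg _))
   _ = ∑ j ∈ s, |x j| := Real.sqrt_sq (Finset.sum_nonneg fun i _ => abs_nonneg _)

lemma cross_zero {ι : Type*} [Fintype ι] (T : Finset ι) (i : ι) (hi : i ∉ T) :
    (∫ g : ι → ℝ, Real.sqrt (∑ j ∈ T, (g j)^2) * g i ∂gpi ι) = 0
    ∧ Integrable (fun g : ι → ℝ => Real.sqrt (∑ j ∈ T, (g j)^2) * g i) (gpi ι) := by
  obtain ⟨p, hp⟩ : ∃ p : ι → Prop, p = fun j => j ∈ T := ⟨_, rfl⟩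
  have hpi : ¬ p i := by rw [hp]; exact hi
  set F₁ : ({ j // p j } → ℝ) → ℝ := fun x => Real.sqrt (∑ j, (x j)^2) with hF₁
  set F₂ : ({ j // ¬ p j } → ℝ) → ℝ := fun y => y ⟨i, hpi⟩ with hF₂
  have hid : AEStronglyMeasurable (fun t : ℝ => t) (gaussianReal 0 1) :=
    aestronglyMeasurable_id
  have hfun : ∀ g : ι → ℝ, Real.sqrt (∑ j ∈ T, (g j)^2) * g i
      = F₁ (fun j => g j) * F₂ (fun j => g j) := by
    intro g
    have h2 : ∑ j ∈ T, (g j)^2 = ∑ j : { j // p j }, (g j)^2 :=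
      Finset.sum_subtype T (fun x => by rw [hp]) _
    rw [hF₁, hF₂]
    simp only []
    rw [h2]
  constructor
  · simp_rw [hfun]
    rw [split_eq p F₁ F₂]
    refine mul_eq_zero_of_right _ ?_
    exact (integral_eval_gpi (⟨i, hpi⟩ : { j // ¬ p j }) (fun t => t) hid).trans gauss_integral_id
  · simp_rw [hfun]
    refine split_int p ?_ ?_
    · exact @integrable_sqrt_sum' _ _ _
    · exact (integrable_eval_gpi (⟨i, hpi⟩ : { j // ¬ p j }) (fun t => t) hid).mpr
        gauss_integrable_id

lemma euclid_norm_sq {n : ℕ} (x : EuclideanSpace ℝ (Fin n)) : ‖x‖^2 = ∑ i, (x i)^2 := by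
  rw [EuclideanSpace.norm_eq, Real.sq_sqrt (Finset.sum_nonneg fun i _ => sq_nonneg _)]
  simp only [Real.norm_eq_abs, sq_abs]

lemma restrict'_norm_sq {n : ℕ} (I : Finset (Fin n)) (g : EuclideanSpace ℝ (Fin n)) :
    ‖restrict' I g‖^2 = ∑ i ∈ I, (g i)^2 := by
  rw [euclid_norm_sq]
  have h : ∀ i : Fin n, (restrict' I g i)^2 = if i ∈ I then (g i)^2 else 0 := by
    intro i; rw [restrict', WithLp.ofLp_toLp]; dsimp only; split <;> simp
  simp_rw [h]
  rw [Finset.sum_ite_mem, Finset.univ_inter]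

lemma sum_restrict' {n l : ℕ} (V : Fin l → Finset (Fin n))
    (hdisj : ∀ b b', b ≠ b' → Disjoint (V b) (V b'))
    (A : Finset (Fin l)) (g : EuclideanSpace ℝ (Fin n)) :
    (∑ b ∈ A, restrict' (V b) g) = restrict' (A.biUnion V) g := by
  ext i
  have happ : (∑ b ∈ A, restrict' (V b) g) i = ∑ b ∈ A, restrict' (V b) g i := by
    rw [WithLp.ofLp_sum, Finset.sum_apply]
  rw [happ, restrict']
  simp only []
  by_cases h : i ∈ A.biUnion V
  · rw [if_pos h]
    obtain ⟨b₀, hb₀, hib₀⟩ := Finset.mem_biUnion.mp h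
    rw [Finset.sum_eq_single_of_mem b₀ hb₀ ?side]
    · rw [restrict', WithLp.ofLp_toLp, if_pos hib₀]
    case side =>
      intro b hb hne
      rw [restrict', WithLp.ofLp_toLp, if_neg (fun hib => (Finset.disjoint_left.mp (hdisj b b₀ hne) hib) hib₀)]
  · rw [if_neg h]
    exact Finset.sum_eq_zero fun b hb => by
      rw [restrict', WithLp.ofLp_toLp, if_neg (fun hib => h (Finset.mem_biUnion.mpr ⟨b, hb, hib⟩))]

end Aux

/-- For `g` standard Gaussian with blocks `V₁,…,V_l` of size `k`, block support `B` of
size `s`, and `z(g) := ‖Σ_{b∉B} g_{V_b}‖₂·(Σ_{b∈B} x⋆_{V_b}/‖x⋆_{V_b}‖₂ − λφ) + Σ_{b∉B} g_{V_b}`,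
one has `E‖g − z(g)‖₂² = k·(s + (l − s)·u₂)` with
`u₂ = ‖Σ_{b∈B} x⋆_{V_b}/‖x⋆_{V_b}‖₂ − λφ‖₂²`. -/
theorem expected_sq_dist_block (n l k s : ℕ) (V : Fin l → Finset (Fin n))
    (hcard : ∀ b, (V b).card = k)
    (hdisj : ∀ b b', b ≠ b' → Disjoint (V b) (V b'))
    (hcover : ∀ i : Fin n, ∃ b, i ∈ V b)
    (B : Finset (Fin l)) (hB : B.card = s)
    (xstar φ : EuclideanSpace ℝ (Fin n)) (lam : ℝ)
    (hnz : ∀ b ∈ B, restrict' (V b) xstar ≠ 0) :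
    (∫ g, ‖g - (‖∑ b ∈ Bᶜ, restrict' (V b) g‖
            • ((∑ b ∈ B, ‖restrict' (V b) xstar‖⁻¹ • restrict' (V b) xstar) - lam • φ)
          + ∑ b ∈ Bᶜ, restrict' (V b) g)‖ ^ 2 ∂(stdGaussian n))
      = (k : ℝ) * ((s : ℝ) + ((l : ℝ) - s)
          * ‖(∑ b ∈ B, ‖restrict' (V b) xstar‖⁻¹ • restrict' (V b) xstar) - lam • φ‖ ^ 2) := by
  set w : EuclideanSpace ℝ (Fin n) :=
    (∑ b ∈ B, ‖restrict' (V b) xstar‖⁻¹ • restrict' (V b) xstar) - lam • φ with hw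
  set S : Finset (Fin n) := B.biUnion V with hS
  set T : Finset (Fin n) := Bᶜ.biUnion V with hTdef
  -- membership dichotomy
  have huniq : ∀ (i : Fin n) (b : Fin l), i ∈ V b → ∀ A : Finset (Fin l),
      (i ∈ A.biUnion V ↔ b ∈ A) := by
    intro i b hib A
    constructor
    · rintro h
      obtain ⟨b', hb', hib'⟩ := Finset.mem_biUnion.mp h
      rcases eq_or_ne b' b with rfl | hne
      · exact hb'
      · exact absurd hib (Finset.disjoint_left.mp (hdisj b' b hne) hib')
    · intro hbA; exact Finset.mem_biUnion.mpr ⟨b, hbA, hib⟩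
  have hT : ∀ i : Fin n, i ∈ T ↔ i ∉ S := by
    intro i
    obtain ⟨b, hib⟩ := hcover i
    rw [hTdef, hS, huniq i b hib, huniq i b hib, Finset.mem_compl]
  -- pointwise identity
  have hpt : ∀ g : EuclideanSpace ℝ (Fin n),
      ‖g - (‖∑ b ∈ Bᶜ, restrict' (V b) g‖ • w + ∑ b ∈ Bᶜ, restrict' (V b) g)‖ ^ 2
      = (∑ i ∈ S, (g i)^2)
        - 2 * (Real.sqrt (∑ i ∈ T, (g i)^2) * (∑ i ∈ S, g i * w i))
        + (∑ i ∈ T, (g i)^2) * ‖w‖^2 := by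
    intro g
    rw [sum_restrict' V hdisj Bᶜ g, ← hTdef]
    set r : ℝ := ‖restrict' T g‖ with hr
    have hrs : r = Real.sqrt (∑ i ∈ T, (g i)^2) := by
      rw [hr, show ∑ i ∈ T, (g i)^2 = ‖restrict' T g‖^2 from (restrict'_norm_sq T g).symm,
        Real.sqrt_sq (norm_nonneg _)]
    have hv : ∀ i : Fin n, (g - (r • w + restrict' T g)) i
        = (if i ∈ S then g i else 0) - r * w i := by
      intro i
      simp only [PiLp.sub_apply, PiLp.add_apply, PiLp.smul_apply, smul_eq_mul]
      rw [restrict']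
      simp only []
      by_cases h : i ∈ S
      · rw [if_pos h, if_neg (fun hiT => (hT i).mp hiT h)]; ring
      · rw [if_neg h, if_pos ((hT i).mpr h)]; ring
    rw [euclid_norm_sq]
    simp_rw [hv]
    have hexp : ∀ i : Fin n, ((if i ∈ S then g i else 0) - r * w i)^2
        = (if i ∈ S then (g i)^2 else 0) - 2 * r * (if i ∈ S then g i * w i else 0)
          + r^2 * (w i)^2 := by
      intro i; split <;> ring
    simp_rw [hexp]
    rw [Finset.sum_add_distrib, Finset.sum_sub_distrib, Finset.sum_ite_mem, Finset.univ_inter,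
      ← Finset.mul_sum, Finset.sum_ite_mem, Finset.univ_inter, ← Finset.mul_sum,
      ← euclid_norm_sq, hrs]
    rw [show Real.sqrt (∑ i ∈ T, (g i)^2) ^ 2 = ∑ i ∈ T, (g i)^2 from
      Real.sq_sqrt (Finset.sum_nonneg fun i _ => sq_nonneg _)]
    ring
  -- move to coordinates
  have hsq : AEStronglyMeasurable (fun t : ℝ => t^2) (gaussianReal 0 1) :=
    (continuous_pow 2).measurable.aestronglyMeasurable
  have intsq : ∀ i : Fin n, Integrable (fun g : Fin n → ℝ => (g i)^2) (gpi (Fin n)) :=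
    fun i => (integrable_eval_gpi i (fun t => t^2) hsq).mpr gauss_integrable_sq
  have hsumint : ∀ I : Finset (Fin n),
      Integrable (fun g : Fin n → ℝ => ∑ i ∈ I, (g i)^2) (gpi (Fin n)) :=
    fun I => integrable_finset_sum _ fun i _ => intsq i
  have hsumval : ∀ I : Finset (Fin n),
      ∫ g : Fin n → ℝ, ∑ i ∈ I, (g i)^2 ∂gpi (Fin n) = I.card := by
    intro I
    rw [integral_finset_sum _ fun i _ => intsq i]
    rw [Finset.sum_congr rfl fun i _ =>
      (integral_eval_gpi i (fun t => t^2) hsq).trans gauss_integral_sq]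
    simp
  have hiT : ∀ i ∈ S, i ∉ T := fun i hiS hiT => (hT i).mp hiT hiS
  have hCfun : (fun g : Fin n → ℝ =>
        Real.sqrt (∑ j ∈ T, (g j)^2) * (∑ i ∈ S, g i * w i))
      = fun g : Fin n → ℝ => ∑ i ∈ S, w i * (Real.sqrt (∑ j ∈ T, (g j)^2) * g i) := by
    funext g
    rw [Finset.mul_sum]
    exact Finset.sum_congr rfl fun i _ => by ring
  have intC : Integrable (fun g : Fin n → ℝ =>
      Real.sqrt (∑ j ∈ T, (g j)^2) * (∑ i ∈ S, g i * w i)) (gpi (Fin n)) := by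
    rw [hCfun]
    exact integrable_finset_sum _ fun i hi => ((cross_zero T i (hiT i hi)).2).const_mul (w i)
  have hCval : ∫ g : Fin n → ℝ,
      Real.sqrt (∑ j ∈ T, (g j)^2) * (∑ i ∈ S, g i * w i) ∂gpi (Fin n) = 0 := by
    rw [hCfun, integral_finset_sum _ fun i hi => ((cross_zero T i (hiT i hi)).2).const_mul (w i)]
    refine Finset.sum_eq_zero fun i hi => ?_
    rw [integral_const_mul, (cross_zero T i (hiT i hi)).1, mul_zero]
  -- cardinalities
  have hsl : s ≤ l := by
    rw [← hB]
    simpa using Finset.card_le_univ B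
  have hScard : S.card = s * k := by
    rw [hS, Finset.card_biUnion fun b _ b' _ hne => hdisj b b' hne]
    rw [Finset.sum_congr rfl fun b _ => hcard b, Finset.sum_const, hB, smul_eq_mul]
  have hTcard : T.card = (l - s) * k := by
    rw [hTdef, Finset.card_biUnion fun b _ b' _ hne => hdisj b b' hne]
    rw [Finset.sum_congr rfl fun b _ => hcard b, Finset.sum_const, Finset.card_compl,
      Fintype.card_fin, hB, smul_eq_mul]
  -- main computation
  calc (∫ g, ‖g - (‖∑ b ∈ Bᶜ, restrict' (V b) g‖ • w + ∑ b ∈ Bᶜ, restrict' (V b) g)‖ ^ 2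
          ∂stdGaussian n)
      = ∫ g, ((∑ i ∈ S, (g i)^2)
          - 2 * (Real.sqrt (∑ i ∈ T, (g i)^2) * (∑ i ∈ S, g i * w i))
          + (∑ i ∈ T, (g i)^2) * ‖w‖^2) ∂stdGaussian n :=
        integral_congr_ae (Filter.Eventually.of_forall hpt)
    _ = ∫ g : Fin n → ℝ, ((∑ i ∈ S, (g i)^2)
          - 2 * (Real.sqrt (∑ i ∈ T, (g i)^2) * (∑ i ∈ S, g i * w i))
          + (∑ i ∈ T, (g i)^2) * ‖w‖^2) ∂gpi (Fin n) := by
          rw [_root_.stdGaussian, integral_map_equiv]; rfl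
    _ = (S.card : ℝ) - 2 * 0 + (T.card : ℝ) * ‖w‖^2 := by
        have int2 : Integrable (fun g : Fin n → ℝ =>
            2 * (Real.sqrt (∑ i ∈ T, (g i)^2) * (∑ i ∈ S, g i * w i))) (gpi (Fin n)) :=
          intC.const_mul 2
        have int1 : Integrable (fun g : Fin n → ℝ => (∑ i ∈ S, (g i)^2)
            - 2 * (Real.sqrt (∑ i ∈ T, (g i)^2) * (∑ i ∈ S, g i * w i))) (gpi (Fin n)) :=
          (hsumint S).sub int2
        have int3 : Integrable (fun g : Fin n → ℝ =>
            (∑ i ∈ T, (g i)^2) * ‖w‖^2) (gpi (Fin n)) := (hsumint T).mul_const _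
        rw [integral_add int1 int3, integral_sub (hsumint S) int2, integral_const_mul,
          integral_mul_const, hsumval S, hsumval T, hCval]
    _ = (k : ℝ) * ((s : ℝ) + ((l : ℝ) - s) * ‖w‖ ^ 2) := by
        rw [hScard, hTcard]
        push_cast [Nat.cast_sub hsl]
        ring
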